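/- Let C be a centralic category. If f : X → Y and g : X' → Y are both central morphisms, then any cooperator ρ : X × X' → Y for f and g is itself a central morphism. -/

import Mathlib

open CategoryTheory CategoryTheory.Limits

universe v u

/-- A pointed category with binary products is *centralic*. -/
def Centralic (C : Type u) [Category.{v} C] [HasZeroObject C] [HasZeroMorphisms C]
    [HasBinaryProducts C] : Prop :=
  ∀ ⦃X Y Z S : C⦄ (f : X ⨯ Y ⟶ Z) (x x' : S ⟶ X) (y : S ⟶ Y),
    prod.lift x 0 ≫ f = prod.lift x' 0 ≫ f →
    prod.lift x y ≫ f = prod.lift x' y ≫ f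

/-- `ρ : A ⨯ B ⟶ X` is a cooperator for `f : A ⟶ X` and `g : B ⟶ X`. -/
def IsCooperator {C : Type u} [Category.{v} C] [HasZeroObject C] [HasZeroMorphisms C]
    [HasBinaryProducts C] {A B X : C} (f : A ⟶ X) (g : B ⟶ X) (ρ : A ⨯ B ⟶ X) : Prop :=
  prod.lift (𝟙 A) 0 ≫ ρ = f ∧ prod.lift 0 (𝟙 B) ≫ ρ = g

/-- Two morphisms with common codomain commute if they admit a cooperator. -/
def Commutes {C : Type u} [Category.{v} C] [HasZeroObject C] [HasZeroMorphisms C]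
    [HasBinaryProducts C] {A B X : C} (f : A ⟶ X) (g : B ⟶ X) : Prop :=
  ∃ ρ : A ⨯ B ⟶ X, IsCooperator f g ρ

/-- A morphism `f : A ⟶ B` is central if it commutes with `𝟙 B`. -/
def Central {C : Type u} [Category.{v} C] [HasZeroObject C] [HasZeroMorphisms C]
    [HasBinaryProducts C] {A B : C} (f : A ⟶ B) : Prop :=
  Commutes f (𝟙 B)

/-- Precomposition of a `prod.lift` with the "unit" lift of a cooperator. -/
private lemma lift_left_comp {C : Type u} [Category.{v} C] [HasZeroObject C]
    [HasZeroMorphisms C] [HasBinaryProducts C] {A B X S : C} (ρ : A ⨯ B ⟶ X)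
    (a : S ⟶ A) :
    prod.lift a (0 : S ⟶ B) ≫ ρ = a ≫ prod.lift (𝟙 A) 0 ≫ ρ := by
  rw [← Category.assoc, prod.comp_lift]
  simp

private lemma lift_right_comp {C : Type u} [Category.{v} C] [HasZeroObject C]
    [HasZeroMorphisms C] [HasBinaryProducts C] {A B X S : C} (ρ : A ⨯ B ⟶ X)
    (b : S ⟶ B) :
    prod.lift (0 : S ⟶ A) b ≫ ρ = b ≫ prod.lift 0 (𝟙 B) ≫ ρ := by
  rw [← Category.assoc, prod.comp_lift]
  simp

private lemma comp_lift_assoc' {C : Type u} [Category.{v} C] [HasZeroObject C]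
    [HasZeroMorphisms C] [HasBinaryProducts C] {V W X Y Z : C}
    (f : V ⟶ W) (g : W ⟶ X) (h : W ⟶ Y) (k : X ⨯ Y ⟶ Z) :
    f ≫ prod.lift g h ≫ k = prod.lift (f ≫ g) (f ≫ h) ≫ k := by
  rw [← Category.assoc, prod.comp_lift]

/-- A cooperator of two central morphisms is central. -/
theorem stmt6 (C : Type u) [Category.{v} C] [HasZeroObject C] [HasZeroMorphisms C]
    [HasBinaryProducts C] (hC : Centralic C)
    {X X' Y : C} (f : X ⟶ Y) (g : X' ⟶ Y) (hf : Central f) (hg : Central g)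
    (ρ : X ⨯ X' ⟶ Y) (hρ : IsCooperator f g ρ) :
    Central ρ := by
  obtain ⟨φ, hφ1, hφ2⟩ := hf
  obtain ⟨ψ, hψ1, hψ2⟩ := hg
  obtain ⟨hρ1, hρ2⟩ := hρ
  have hφa : ∀ {S : C} (a : S ⟶ X), prod.lift a (0 : S ⟶ Y) ≫ φ = a ≫ f := by
    intro S a; rw [lift_left_comp, hφ1]
  have hφb : ∀ {S : C} (y : S ⟶ Y), prod.lift (0 : S ⟶ X) y ≫ φ = y := by
    intro S y; rw [lift_right_comp, hφ2, Category.comp_id]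
  have hψa : ∀ {S : C} (b : S ⟶ X'), prod.lift b (0 : S ⟶ Y) ≫ ψ = b ≫ g := by
    intro S b; rw [lift_left_comp, hψ1]
  have hψb : ∀ {S : C} (y : S ⟶ Y), prod.lift (0 : S ⟶ X') y ≫ ψ = y := by
    intro S y; rw [lift_right_comp, hψ2, Category.comp_id]
  have hρa : ∀ {S : C} (a : S ⟶ X), prod.lift a (0 : S ⟶ X') ≫ ρ = a ≫ f := by
    intro S a; rw [lift_left_comp, hρ1]
  have hρb : ∀ {S : C} (b : S ⟶ X'), prod.lift (0 : S ⟶ X) b ≫ ρ = b ≫ g := by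
    intro S b; rw [lift_right_comp, hρ2]
  -- key: ψ ∘ ⟨π₂, π₁ ≫ f⟩ = ρ, via the centralic property applied to
  -- G : (X' ⨯ X') ⨯ X ⟶ Y, G((b,b'),a) = ψ(b, ρ(a,b')).
  have key : prod.lift (prod.lift prod.snd 0) prod.fst ≫
        (prod.lift (prod.fst ≫ prod.fst)
          (prod.lift prod.snd (prod.fst ≫ prod.snd) ≫ ρ) ≫ ψ)
      = prod.lift (prod.lift (0 : X ⨯ X' ⟶ X') prod.snd) prod.fst ≫
        (prod.lift (prod.fst ≫ prod.fst)
          (prod.lift prod.snd (prod.fst ≫ prod.snd) ≫ ρ) ≫ ψ) := by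
    apply hC _ _ _ _
    simp [comp_lift_assoc', prod.comp_lift, hψa, hψb, hρa, hρb, prod.lift_fst_assoc,
      prod.lift_snd_assoc, prod.lift_fst, prod.lift_snd]
  rw [← Category.assoc, ← Category.assoc] at key
  simp only [comp_lift_assoc', prod.comp_lift, Category.assoc, prod.lift_fst, prod.lift_snd,
    prod.lift_fst_assoc, prod.lift_snd_assoc, zero_comp, comp_zero] at key
  rw [hρa, hψb, prod.lift_fst_snd, Category.id_comp] at key
  -- now `key : prod.lift prod.snd (prod.fst ≫ f) ≫ ψ = ρ`
  refine ⟨prod.lift (prod.fst ≫ prod.snd)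
      (prod.lift (prod.fst ≫ prod.fst) prod.snd ≫ φ) ≫ ψ, ?_, ?_⟩
  · rw [← Category.assoc, prod.comp_lift]
    simp only [comp_lift_assoc', prod.comp_lift, Category.assoc, prod.lift_fst, prod.lift_snd,
      prod.lift_fst_assoc, prod.lift_snd_assoc, zero_comp, comp_zero,
      Category.id_comp]
    rw [hφa]
    exact key
  · rw [← Category.assoc, prod.comp_lift]
    simp only [comp_lift_assoc', prod.comp_lift, Category.assoc, prod.lift_fst, prod.lift_snd,
      prod.lift_fst_assoc, prod.lift_snd_assoc, zero_comp, comp_zero,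
      Category.id_comp]
    rw [hφb, hψb]
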